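/- For real a > 0 and real b with |Im b| interpreted as 0 (b real), ∫₀^∞ e^{-a x} · sin(b x)/x dx = arctan(b/a). -/

import Mathlib

open Real MeasureTheory Set Filter

private lemma exp_int (a : ℝ) (ha : 0 < a) :
    IntegrableOn (fun x : ℝ => Real.exp (-a * x)) (Set.Ioi 0) :=
  exp_neg_integrableOn_Ioi 0 ha

private lemma cos_int (a b : ℝ) (ha : 0 < a) :
    IntegrableOn (fun x : ℝ => Real.exp (-a * x) * Real.cos (b * x)) (Set.Ioi 0) := by
  refine (exp_int a ha).mono' ?_ ?_
  · exact (((Real.continuous_exp.comp (continuous_const.mul continuous_id)).mul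
      (Real.continuous_cos.comp (continuous_const.mul continuous_id))).aestronglyMeasurable).restrict
  · filter_upwards with x
    rw [norm_mul, Real.norm_eq_abs, Real.norm_eq_abs, abs_of_pos (Real.exp_pos _)]
    calc Real.exp (-a*x) * |Real.cos (b*x)| ≤ Real.exp (-a*x) * 1 :=
          mul_le_mul_of_nonneg_left (Real.abs_cos_le_one _) (Real.exp_pos _).le
      _ = Real.exp (-a*x) := mul_one _

private lemma cos_integral (a b : ℝ) (ha : 0 < a) :
    ∫ x in Set.Ioi (0:ℝ), Real.exp (-a * x) * Real.cos (b * x) = a / (a^2 + b^2) := by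
  have hab : 0 < a^2 + b^2 := by positivity
  set G : ℝ → ℝ := fun x => Real.exp (-a * x) * (b * Real.sin (b * x) - a * Real.cos (b * x)) / (a^2 + b^2) with hG
  have hderiv : ∀ x : ℝ, HasDerivAt G (Real.exp (-a * x) * Real.cos (b * x)) x := by
    intro x
    have h1 : HasDerivAt (fun x : ℝ => Real.exp (-a * x)) (-a * Real.exp (-a * x)) x := by
      simpa [mul_comm] using ((hasDerivAt_id x).const_mul (-a)).exp
    have hs : HasDerivAt (fun x : ℝ => Real.sin (b * x)) (Real.cos (b * x) * b) x := by
      simpa using ((hasDerivAt_id x).const_mul b).sin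
    have hc : HasDerivAt (fun x : ℝ => Real.cos (b * x)) (-Real.sin (b * x) * b) x := by
      simpa using ((hasDerivAt_id x).const_mul b).cos
    have h2 : HasDerivAt (fun x : ℝ => b * Real.sin (b * x) - a * Real.cos (b * x))
        (b * (Real.cos (b * x) * b) - a * (-Real.sin (b * x) * b)) x :=
      (hs.const_mul b).sub (hc.const_mul a)
    have h3 := (h1.mul h2).div_const (a^2 + b^2)
    refine h3.congr_deriv ?_
    field_simp
    ring
  have hlim : Tendsto G atTop (nhds 0) := by
    have hb : ∀ x : ℝ, |G x| ≤ Real.exp (-a * x) * ((|b| + |a|) / (a^2 + b^2)) := by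
      intro x
      rw [hG]
      simp only
      rw [abs_div, abs_mul, abs_of_pos hab, abs_of_pos (Real.exp_pos _)]
      rw [mul_div_assoc]
      apply mul_le_mul_of_nonneg_left _ (Real.exp_pos _).le
      gcongr
      calc |b * Real.sin (b*x) - a * Real.cos (b*x)|
            ≤ |b * Real.sin (b*x)| + |a * Real.cos (b*x)| := abs_sub _ _
          _ ≤ |b| * 1 + |a| * 1 := by
              rw [abs_mul, abs_mul]
              exact add_le_add (mul_le_mul_of_nonneg_left (Real.abs_sin_le_one _) (abs_nonneg b))
                (mul_le_mul_of_nonneg_left (Real.abs_cos_le_one _) (abs_nonneg a))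
          _ = |b| + |a| := by ring
    have h0 : Tendsto (fun x => Real.exp (-a * x) * ((|b| + |a|) / (a^2 + b^2))) atTop (nhds 0) := by
      rw [show (0:ℝ) = 0 * ((|b| + |a|) / (a^2 + b^2)) by ring]
      exact (Real.tendsto_exp_atBot.comp (tendsto_id.const_mul_atTop_of_neg (neg_lt_zero.mpr ha))).mul_const _
    refine squeeze_zero_norm (fun x => ?_) h0
    exact hb x
  have := integral_Ioi_of_hasDerivAt_of_tendsto' (a := 0) (fun x _ => hderiv x)
    (cos_int a b ha) hlim
  rw [this, hG]
  simp
  field_simp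

theorem stmt_3 (a b : ℝ) (ha : 0 < a) :
    ∫ x in Set.Ioi (0:ℝ), Real.exp (-a * x) * (Real.sin (b * x) / x) =
      Real.arctan (b / a) := by
  set F : ℝ → ℝ := fun c => ∫ x in Set.Ioi (0:ℝ), Real.exp (-a * x) * (Real.sin (c * x) / x)
    with hF
  have hmeas : ∀ c : ℝ, AEStronglyMeasurable
      (fun x : ℝ => Real.exp (-a * x) * (Real.sin (c * x) / x))
      (volume.restrict (Set.Ioi 0)) := by
    intro c
    apply ContinuousOn.aestronglyMeasurable _ measurableSet_Ioi
    intro x hx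
    have hx0 : x ≠ 0 := ne_of_gt hx
    exact ((Real.continuous_exp.comp (continuous_const.mul continuous_id)).continuousOn.mul
      (((Real.continuous_sin.comp (continuous_const.mul continuous_id)).continuousOn).div
        continuousOn_id (fun y hy => ne_of_gt hy))) x hx
  have hIntF : ∀ c : ℝ, IntegrableOn
      (fun x : ℝ => Real.exp (-a * x) * (Real.sin (c * x) / x)) (Set.Ioi 0) := by
    intro c
    refine ((exp_int a ha).const_mul |c|).mono' (hmeas c) ?_
    filter_upwards [ae_restrict_mem measurableSet_Ioi] with x hx
    have hx0 : (0:ℝ) < x := hx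
    rw [norm_mul, Real.norm_eq_abs, Real.norm_eq_abs, abs_of_pos (Real.exp_pos _),
      abs_div, abs_of_pos hx0]
    rw [mul_comm (|c|)]
    apply mul_le_mul_of_nonneg_left _ (Real.exp_pos _).le
    rw [div_le_iff₀ hx0]
    calc |Real.sin (c * x)| ≤ |c * x| := Real.abs_sin_le_abs
      _ = |c| * x := by rw [abs_mul, abs_of_pos hx0]
  -- derivative of F
  have hFderiv : ∀ c : ℝ, HasDerivAt F (a / (a^2 + c^2)) c := by
    intro c
    have key : HasDerivAt F (∫ x in Set.Ioi (0:ℝ), Real.exp (-a * x) * Real.cos (c * x)) c := by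
      have := hasDerivAt_integral_of_dominated_loc_of_deriv_le
        (μ := volume.restrict (Set.Ioi (0:ℝ)))
        (F := fun c x => Real.exp (-a * x) * (Real.sin (c * x) / x))
        (F' := fun c x => Real.exp (-a * x) * Real.cos (c * x))
        (x₀ := c) (bound := fun x => Real.exp (-a * x))
        (s := Metric.ball c 1) (Metric.ball_mem_nhds c one_pos)
        (Filter.Eventually.of_forall (fun y => hmeas y))
        (hIntF c)
        ((((Real.continuous_exp.comp (continuous_const.mul continuous_id)).mul
          (Real.continuous_cos.comp (continuous_const.mul continuous_id))).aestronglyMeasurable).restrict)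
        ?_ ((exp_int a ha))
        ?_
      · exact this.2
      · filter_upwards with x
        intro y _
        rw [norm_mul, Real.norm_eq_abs, Real.norm_eq_abs, abs_of_pos (Real.exp_pos _)]
        calc Real.exp (-a*x) * |Real.cos (y*x)| ≤ Real.exp (-a*x) * 1 :=
              mul_le_mul_of_nonneg_left (Real.abs_cos_le_one _) (Real.exp_pos _).le
          _ = Real.exp (-a*x) := mul_one _
      · filter_upwards [ae_restrict_mem measurableSet_Ioi] with x hx
        intro y _
        have hx0 : x ≠ 0 := ne_of_gt hx
        have hs : HasDerivAt (fun y : ℝ => Real.sin (y * x)) (Real.cos (y * x) * x) y := by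
          simpa using ((hasDerivAt_id y).mul_const x).sin
        have h2 : HasDerivAt (fun y : ℝ => Real.sin (y * x) / x)
            (Real.cos (y * x) * x / x) y := hs.div_const x
        rw [mul_div_assoc, div_self hx0, mul_one] at h2
        simpa using h2.const_mul (Real.exp (-a * x))
    rwa [cos_integral a c ha] at key
  -- arctan derivative
  have hAder : ∀ c : ℝ, HasDerivAt (fun c : ℝ => Real.arctan (c / a)) (a / (a^2 + c^2)) c := by
    intro c
    have h1 : HasDerivAt (fun c : ℝ => c / a) (1 / a) c := by
      simpa using (hasDerivAt_id c).div_const a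
    have := (Real.hasDerivAt_arctan (c / a)).comp c h1
    refine this.congr_deriv ?_
    have ha' : a ≠ 0 := ne_of_gt ha
    field_simp
  -- constancy of difference
  have hdiff : ∀ c : ℝ, HasDerivAt (fun c : ℝ => F c - Real.arctan (c / a)) 0 c := by
    intro c
    exact ((hFderiv c).sub (hAder c)).congr_deriv (sub_self _)
  have hconst : F b - Real.arctan (b / a) = F 0 - Real.arctan (0 / a) := by
    apply is_const_of_deriv_eq_zero (fun c => (hdiff c).differentiableAt)
    intro c
    exact (hdiff c).deriv
  have hF0 : F 0 = 0 := by
    rw [hF]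
    simp
  have harc0 : Real.arctan (0 / a) = 0 := by simp
  rw [hF0, harc0, sub_zero] at hconst
  have : F b = Real.arctan (b / a) := by linarith
  rw [hF] at this
  exact this
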